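/- Every symmetrized monomial of the form [a,b,0,…,0] (at most two nonzero entries) is completely squeezable: every symmetrized monomial of the same degree and arity that is strictly smaller in lexicographic order lies strictly below it in the squeezing order. -/

import Mathlib

/-- One squeeze: decrement an entry `a` and increment an entry `b` with `a > b + 1`. -/
def SqueezeStep (s t : Multiset ℕ) : Prop :=
  ∃ (u : Multiset ℕ) (a b : ℕ), b + 1 < a ∧ s = a ::ₘ b ::ₘ u ∧ t = (a - 1) ::ₘ (b + 1) ::ₘ u

/-- The (strict) squeezing order: `t` is obtained from `s` by a nonempty sequence of squeezes. -/
def Squeezes (s t : Multiset ℕ) : Prop := Relation.TransGen SqueezeStep s t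

/-- A symmetrized monomial written as a weakly decreasing sequence. -/
def sortedDesc (s : Multiset ℕ) : List ℕ := (Multiset.sort s (· ≤ ·)).reverse

/-- The strict lexicographic order on symmetrized monomials, compared as weakly
decreasing sequences. -/
def LexGT (s t : Multiset ℕ) : Prop := List.Lex (· < ·) (sortedDesc t) (sortedDesc s)

namespace Stmt15Aux

/-- Sum of squares of a multiset. -/
def sumSq (t : Multiset ℕ) : ℕ := (t.map (fun z => z * z)).sum

lemma sumSq_cons (x : ℕ) (u : Multiset ℕ) : sumSq (x ::ₘ u) = x * x + sumSq u := by
  simp [sumSq]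

lemma sumSq_le_sq_sum (t : Multiset ℕ) : sumSq t ≤ t.sum * t.sum := by
  induction t using Multiset.induction with
  | empty => simp [sumSq]
  | cons a u ih =>
    rw [sumSq_cons, Multiset.sum_cons]
    have h : (a + u.sum) * (a + u.sum) = a * a + 2 * (a * u.sum) + u.sum * u.sum := by ring
    omega

/-- Every nonempty multiset of naturals has a maximal element on top. -/
lemma exists_max (t : Multiset ℕ) (h : t ≠ 0) :
    ∃ x u, t = x ::ₘ u ∧ ∀ z ∈ u, z ≤ x := by
  induction t using Multiset.induction with
  | empty => exact absurd rfl h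
  | cons a w ih =>
    by_cases hw : w = 0
    · exact ⟨a, w, rfl, by simp [hw]⟩
    · obtain ⟨x, u, hxu, hmax⟩ := ih hw
      by_cases hax : a ≤ x
      · refine ⟨x, a ::ₘ u, ?_, ?_⟩
        · rw [hxu, Multiset.cons_swap]
        · intro z hz
          rcases Multiset.mem_cons.mp hz with h | h
          · omega
          · exact hmax z h
      · refine ⟨a, w, rfl, ?_⟩
        intro z hz
        rw [hxu] at hz
        rcases Multiset.mem_cons.mp hz with h | h
        · omega
        · have := hmax z h; omega

/-- The invariant maintained during un-squeezing. -/
def Pd (A B : ℕ) (t : Multiset ℕ) : Prop :=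
  (∀ z ∈ t, z < A) ∨ ∃ v, t = A ::ₘ v ∧ ∀ z ∈ v, z < B

lemma exists_pos_of_sum_pos (v : Multiset ℕ) (h : 0 < v.sum) : ∃ y ∈ v, 1 ≤ y := by
  by_contra hc
  push_neg at hc
  have : v.sum = 0 := Multiset.sum_eq_zero (fun z hz => by have := hc z hz; omega)
  omega

/-- Key dichotomy: a multiset summing to `B` either has all entries `< B`,
or consists of one `B` and zeros. -/
lemma sum_eq_dichotomy (A B n : ℕ) (v : Multiset ℕ) (hv : v.sum = B)
    (hc : Multiset.card v = n - 1) (h2 : 2 ≤ n) :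
    (∀ z ∈ v, z < B) ∨ A ::ₘ v = A ::ₘ B ::ₘ Multiset.replicate (n - 2) 0 := by
  by_cases hall : ∀ z ∈ v, z < B
  · exact Or.inl hall
  · push_neg at hall
    obtain ⟨z, hz, hBz⟩ := hall
    have hzle : z ≤ v.sum := Multiset.le_sum_of_mem hz
    have hzB : z = B := by omega
    subst hzB
    right
    have hve : v = z ::ₘ v.erase z := (Multiset.cons_erase hz).symm
    have hsum0 : (v.erase z).sum = 0 := by
      have h1 : (z ::ₘ v.erase z).sum = z + (v.erase z).sum := Multiset.sum_cons z _
      rw [← hve, hv] at h1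
      omega
    have hall0 : ∀ w ∈ v.erase z, w = 0 := by
      intro w hw
      by_contra hw0
      have : w ≤ (v.erase z).sum := Multiset.le_sum_of_mem hw
      omega
    have hcard : Multiset.card (v.erase z) = n - 2 := by
      have hce := Multiset.card_erase_of_mem hz
      rw [hc] at hce
      simp only [Nat.pred_eq_sub_one] at hce
      omega
    have hrep : v.erase z = Multiset.replicate (n - 2) 0 :=
      Multiset.eq_replicate.mpr ⟨hcard, hall0⟩
    rw [hve, hrep]

/-- The un-squeezing step: from a multiset `t` satisfying the invariant, produce a
decomposition `t = x ::ₘ y ::ₘ u` with `1 ≤ y ≤ x` such that the "unsqueezed"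
multiset `(x+1) ::ₘ (y-1) ::ₘ u` is either `s` or again satisfies the invariant. -/
lemma step (A B n : ℕ) (hBA : B ≤ A) (h2 : 2 ≤ n) (t : Multiset ℕ)
    (hc : Multiset.card t = n) (hsum : t.sum = A + B) (hP : Pd A B t) :
    ∃ x y u, 1 ≤ y ∧ y ≤ x ∧ t = x ::ₘ y ::ₘ u ∧
      ((x + 1) ::ₘ (y - 1) ::ₘ u = A ::ₘ B ::ₘ Multiset.replicate (n - 2) 0 ∨
        Pd A B ((x + 1) ::ₘ (y - 1) ::ₘ u)) := by
  rcases hP with hP | ⟨v, hv, hvB⟩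
  · -- all entries < A
    have hne : t ≠ 0 := by
      intro h0; rw [h0] at hc; simp at hc; omega
    obtain ⟨x, w, hxw, hmax⟩ := exists_max t hne
    have hxA : x < A := hP x (by rw [hxw]; exact Multiset.mem_cons_self _ _)
    have hwsum : w.sum = A + B - x := by
      rw [hxw, Multiset.sum_cons] at hsum; omega
    have hwpos : 0 < w.sum := by omega
    obtain ⟨y, hy, hy1⟩ := exists_pos_of_sum_pos w hwpos
    have hwe : w = y ::ₘ w.erase y := (Multiset.cons_erase hy).symm
    have hwes : w.sum = y + (w.erase y).sum := by
      conv_lhs => rw [hwe]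
      exact Multiset.sum_cons y _
    have hwcard : 0 < Multiset.card w := Multiset.card_pos_iff_exists_mem.mpr ⟨y, hy⟩
    refine ⟨x, y, w.erase y, hy1, hmax y hy, ?_, ?_⟩
    · rw [hxw]; conv_lhs => rw [hwe]
    · by_cases hxA1 : x + 1 < A
      · right; left
        intro z hz
        rcases Multiset.mem_cons.mp hz with h | h
        · omega
        rcases Multiset.mem_cons.mp h with h | h
        · have := hmax y hy; omega
        · have := hmax z (Multiset.mem_of_mem_erase h); omega
      · -- x + 1 = A
        have hxeq : x + 1 = A := by omega
        have hwc : Multiset.card w = n - 1 := by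
          rw [hxw] at hc; simp at hc; omega
        set v' : Multiset ℕ := (y - 1) ::ₘ w.erase y with hv'
        have hv'sum : v'.sum = B := by
          rw [hv', Multiset.sum_cons]
          omega
        have hv'card : Multiset.card v' = n - 1 := by
          rw [hv', Multiset.card_cons, Multiset.card_erase_of_mem hy]
          simp only [Nat.pred_eq_sub_one]
          omega
        rcases sum_eq_dichotomy A B n v' hv'sum hv'card h2 with h | h
        · right; right
          exact ⟨v', by rw [hxeq], h⟩
        · left
          rw [hxeq]
          exact h
  · -- t = A ::ₘ v with all entries of v < B
    have hvsum : v.sum = B := by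
      rw [hv, Multiset.sum_cons] at hsum; omega
    have hvne : v ≠ 0 := by
      intro h0
      rw [hv, h0] at hc; simp at hc; omega
    obtain ⟨x, w, hxw, hmax⟩ := exists_max v hvne
    have hxB : x < B := hvB x (by rw [hxw]; exact Multiset.mem_cons_self _ _)
    have hwsum : w.sum = B - x := by
      rw [hxw, Multiset.sum_cons] at hvsum; omega
    have hwpos : 0 < w.sum := by omega
    obtain ⟨y, hy, hy1⟩ := exists_pos_of_sum_pos w hwpos
    have hwe : w = y ::ₘ w.erase y := (Multiset.cons_erase hy).symm
    have hwes : w.sum = y + (w.erase y).sum := by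
      conv_lhs => rw [hwe]
      exact Multiset.sum_cons y _
    have hwcard : 0 < Multiset.card w := Multiset.card_pos_iff_exists_mem.mpr ⟨y, hy⟩
    refine ⟨x, y, A ::ₘ w.erase y, hy1, hmax y hy, ?_, ?_⟩
    · rw [hv, hxw]
      conv_lhs => rw [hwe]
      rw [Multiset.cons_swap A x, Multiset.cons_swap A y]
    · set v' : Multiset ℕ := (x + 1) ::ₘ (y - 1) ::ₘ w.erase y with hv'
      have hv'sum : v'.sum = B := by
        rw [hv', Multiset.sum_cons, Multiset.sum_cons]
        omega
      have hv'card : Multiset.card v' = n - 1 := by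
        have hvc : Multiset.card v = n - 1 := by
          rw [hv] at hc; simp at hc; omega
        have hwc : Multiset.card w = n - 2 := by
          rw [hxw] at hvc; simp at hvc; omega
        rw [hv', Multiset.card_cons, Multiset.card_cons, Multiset.card_erase_of_mem hy]
        simp only [Nat.pred_eq_sub_one]
        omega
      have heq : (x + 1) ::ₘ (y - 1) ::ₘ A ::ₘ w.erase y = A ::ₘ v' := by
        rw [hv', Multiset.cons_swap (y - 1) A, Multiset.cons_swap (x + 1) A]
      rcases sum_eq_dichotomy A B n v' hv'sum hv'card h2 with h | h
      · right; right
        exact ⟨v', heq, h⟩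
      · left
        rw [heq, h]

/-- Main induction: from the invariant we can squeeze down from `s` to `t`. -/
lemma main (A B n : ℕ) (hBA : B ≤ A) (h2 : 2 ≤ n) :
    ∀ d t, (A + B) * (A + B) + 1 - sumSq t ≤ d → Multiset.card t = n → t.sum = A + B →
      Pd A B t → Squeezes (A ::ₘ B ::ₘ Multiset.replicate (n - 2) 0) t := by
  intro d
  induction d with
  | zero =>
    intro t hd hc hsum hP
    exfalso
    have := sumSq_le_sq_sum t
    rw [hsum] at this
    omega
  | succ d ih =>
    intro t hd hc hsum hP
    obtain ⟨x, y, u, hy1, hyx, htxy, hcase⟩ := step A B n hBA h2 t hc hsum hP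
    obtain ⟨z, rfl⟩ : ∃ z, y = z + 1 := ⟨y - 1, by omega⟩
    have hz : z + 1 - 1 = z := by omega
    rw [hz] at hcase
    have hstep : SqueezeStep ((x + 1) ::ₘ z ::ₘ u) t := by
      refine ⟨u, x + 1, z, by omega, rfl, ?_⟩
      rw [Nat.add_sub_cancel]
      exact htxy
    rcases hcase with hts | hP'
    · rw [← hts]
      exact Relation.TransGen.single hstep
    · have hsum' : ((x + 1) ::ₘ z ::ₘ u).sum = A + B := by
        rw [htxy, Multiset.sum_cons, Multiset.sum_cons] at hsum
        rw [Multiset.sum_cons, Multiset.sum_cons]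
        omega
      have hc' : Multiset.card ((x + 1) ::ₘ z ::ₘ u) = n := by
        rw [htxy] at hc
        simpa using hc
      have hsq : sumSq t < sumSq ((x + 1) ::ₘ z ::ₘ u) := by
        rw [htxy, sumSq_cons, sumSq_cons, sumSq_cons, sumSq_cons]
        nlinarith [hyx]
      have hd' : (A + B) * (A + B) + 1 - sumSq ((x + 1) ::ₘ z ::ₘ u) ≤ d := by
        have hb := sumSq_le_sq_sum ((x + 1) ::ₘ z ::ₘ u)
        rw [hsum'] at hb
        omega
      exact Relation.TransGen.tail (ih _ hd' hc' hsum' hP') hstep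

lemma sortedDesc_coe (t : Multiset ℕ) : (↑(sortedDesc t) : Multiset ℕ) = t := by
  rw [sortedDesc, Multiset.coe_reverse, Multiset.sort_eq]

lemma sortedDesc_sorted (t : Multiset ℕ) : (sortedDesc t).Pairwise (· ≥ ·) :=
  List.pairwise_reverse.mpr (Multiset.pairwise_sort t (· ≤ ·))

lemma sortedDesc_length (t : Multiset ℕ) : (sortedDesc t).length = Multiset.card t := by
  rw [← sortedDesc_coe t, Multiset.coe_card, sortedDesc_coe]

/-- `sortedDesc` of the special multiset `s`. -/
lemma sortedDesc_s (A B n : ℕ) (hBA : B ≤ A) :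
    sortedDesc (A ::ₘ B ::ₘ Multiset.replicate (n - 2) 0) =
      A :: B :: List.replicate (n - 2) 0 := by
  have hco : ((List.replicate (n - 2) 0 ++ [B, A] : List ℕ) : Multiset ℕ)
      = A ::ₘ B ::ₘ Multiset.replicate (n - 2) 0 := by
    have h1 : A ::ₘ B ::ₘ Multiset.replicate (n - 2) 0
        = ((A :: B :: List.replicate (n - 2) 0 : List ℕ) : Multiset ℕ) := by
      rw [← Multiset.coe_replicate]; rfl
    rw [h1, Multiset.coe_eq_coe]
    exact List.perm_append_comm.trans (List.Perm.swap A B _)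
  have hperm : List.Perm (Multiset.sort (A ::ₘ B ::ₘ Multiset.replicate (n - 2) 0) (· ≤ ·))
      (List.replicate (n - 2) 0 ++ [B, A] : List ℕ) := by
    rw [← Multiset.coe_eq_coe, Multiset.sort_eq, hco]
  have hsorted2 : (List.replicate (n - 2) 0 ++ [B, A] : List ℕ).Pairwise (· ≤ ·) := by
    rw [List.pairwise_append]
    refine ⟨List.pairwise_replicate.mpr (Or.inr le_rfl), ?_, ?_⟩
    · simp [hBA]
    · intro x hx y hy
      have : x = 0 := List.eq_of_mem_replicate hx
      omega
  have heq := List.Perm.eq_of_pairwise' (Multiset.pairwise_sort _ _) hsorted2 hperm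
  rw [sortedDesc, heq]
  simp

lemma not_lex_replicate_zero : ∀ (k : ℕ) (l : List ℕ), l.length = k →
    ¬ List.Lex (· < ·) l (List.replicate k 0) := by
  intro k
  induction k with
  | zero =>
    intro l hl hlex
    rw [List.length_eq_zero_iff] at hl
    subst hl
    cases hlex
  | succ k ih =>
    intro l hl hlex
    match l with
    | [] => simp at hl
    | e :: l' =>
      rw [List.replicate_succ] at hlex
      cases hlex with
      | rel h => omega
      | cons h => exact ih l' (by simpa using hl) h

lemma lex_to_P (A B n : ℕ) (hBA : B ≤ A) (h2 : 2 ≤ n) (t : Multiset ℕ)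
    (hc : Multiset.card t = n)
    (hL : LexGT (A ::ₘ B ::ₘ Multiset.replicate (n - 2) 0) t) : Pd A B t := by
  rw [LexGT, sortedDesc_s A B n hBA] at hL
  have hlen : (sortedDesc t).length = n := by rw [sortedDesc_length, hc]
  have hcoe : (↑(sortedDesc t) : Multiset ℕ) = t := sortedDesc_coe t
  have hsorted := sortedDesc_sorted t
  match hlt : sortedDesc t with
  | [] => rw [hlt] at hlen; simp at hlen; omega
  | [c] => rw [hlt] at hlen; simp at hlen; omega
  | c :: c2 :: l2 =>
    rw [hlt] at hL hcoe hsorted hlen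
    rw [List.pairwise_cons] at hsorted
    obtain ⟨hc_max, hsorted2⟩ := hsorted
    rw [List.pairwise_cons] at hsorted2
    obtain ⟨hc2_max, _⟩ := hsorted2
    cases hL with
    | rel h =>
      left
      intro z hz
      rw [← hcoe] at hz
      rcases List.mem_cons.mp hz with h' | h'
      · omega
      · have := hc_max z h'; omega
    | cons hL2 =>
      rename_i hcA
      cases hL2 with
      | rel h =>
        right
        refine ⟨(↑(c2 :: l2) : Multiset ℕ), ?_, ?_⟩
        · rw [← hcoe, ← Multiset.cons_coe]
        · intro z hz
          rw [← Multiset.cons_coe] at hz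
          rcases Multiset.mem_cons.mp hz with h' | h'
          · omega
          · have := hc2_max z (by exact_mod_cast h'); omega
      | cons hL3 =>
        exfalso
        exact not_lex_replicate_zero (n - 2) l2 (by simp at hlen; omega) hL3

end Stmt15Aux

theorem stmt_15 (n : ℕ) (a b : ℕ) (s : Multiset ℕ)
    (hs : s = a ::ₘ b ::ₘ Multiset.replicate (n - 2) 0) (hcard : Multiset.card s = n) :
    ∀ t : Multiset ℕ, Multiset.card t = n → t.sum = s.sum → LexGT s t → Squeezes s t := by
  subst hs
  have h2 : 2 ≤ n := by
    simp at hcard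
    omega
  have hsum : (a ::ₘ b ::ₘ Multiset.replicate (n - 2) 0).sum = a + b := by
    simp
  intro t htc hts hlex
  rcases le_total b a with hba | hab
  · apply Stmt15Aux.main a b n hba h2 ((a + b) * (a + b) + 1 - Stmt15Aux.sumSq t) t le_rfl htc
      (by rw [hts, hsum])
    exact Stmt15Aux.lex_to_P a b n hba h2 t htc hlex
  · have hswap : a ::ₘ b ::ₘ Multiset.replicate (n - 2) 0
        = b ::ₘ a ::ₘ Multiset.replicate (n - 2) 0 := Multiset.cons_swap a b _
    rw [hswap] at hlex ⊢
    apply Stmt15Aux.main b a n hab h2 ((b + a) * (b + a) + 1 - Stmt15Aux.sumSq t) t le_rfl htc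
      (by rw [hts, hsum]; omega)
    exact Stmt15Aux.lex_to_P b a n hab h2 t htc hlex
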